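/- Let τ > 0, C > 0, and consider the model domain Ω_{τ,C} := {(z₁,z₂) ∈ ℂ² : Re z₂ > C|z₁|^τ + C|Im z₂|}. Let W be a neighborhood of the origin in ℂ². Then there exist δ₀ > 0 and M > 0 such that for every δ ∈ (0,δ₀) and every holomorphic function f on Ω_{τ,C} ∩ W with ∫_{Ω_{τ,C} ∩ W} |f|² dλ ≤ 1, one has |f(0,δ)|² ≤ M · δ^{−2−2/τ}. (Equivalently, the Bergman kernel K of Ω_{τ,C} ∩ W satisfies K((0,δ),(0,δ)) ≲ δ^{−2−2/τ} for δ ∈ (0,δ₀), using the variational characterization K(z,z) = sup{|f(z)|² : f holomorphic and L² on the domain with L² norm 1}.) -/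

import Mathlib

open Complex Metric Set MeasureTheory Filter Topology

noncomputable section

/-- The model domain Ω_{τ,C} = {(z₁,z₂) ∈ ℂ² : Re z₂ > C|z₁|^τ + C|Im z₂|}. -/
def modelDomain (τ C : ℝ) : Set (ℂ × ℂ) :=
  {p | C * ‖p.1‖ ^ τ + C * |p.2.im| < p.2.re}

lemma circle_submean {g : ℂ → ℂ} {c : ℂ} {r : ℝ} (hr : 0 < r)
    (hg : DifferentiableOn ℂ g (closedBall c r)) :
    2 * Real.pi * ‖g c‖ ^ 2 ≤ ∫ θ in (0:ℝ)..(2*Real.pi), ‖g (circleMap c r θ)‖ ^ 2 := by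
  set F : ℂ → ℂ := fun z => g z * g z with hF
  have hFd : DifferentiableOn ℂ F (closedBall c r) := hg.mul hg
  have hcau := hFd.circleIntegral_sub_inv_smul (mem_ball_self hr)
  have hnorm : ‖(2 * Real.pi * I : ℂ) • F c‖ = 2 * Real.pi * ‖g c‖ ^ 2 := by
    rw [norm_smul]
    simp [hF, Real.pi_nonneg, sq, abs_of_nonneg]
  have hle : ‖∮ z in C(c, r), (z - c)⁻¹ • F z‖
      ≤ ∫ θ in (0:ℝ)..(2*Real.pi), ‖g (circleMap c r θ)‖ ^ 2 := by
    rw [circleIntegral]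
    refine le_trans (intervalIntegral.norm_integral_le_integral_norm Real.two_pi_pos.le) ?_
    refine le_of_eq (intervalIntegral.integral_congr fun θ _ => ?_)
    rw [deriv_circleMap, norm_smul, norm_smul, circleMap_sub_center]
    have h1 : ‖circleMap 0 r θ * I‖ = r := by
      simp [abs_of_pos hr]
    have h2 : ‖(circleMap 0 r θ)⁻¹‖ = r⁻¹ := by
      simp [abs_of_pos hr]
    rw [h1, h2, hF]
    simp only [norm_mul]
    field_simp
  calc 2 * Real.pi * ‖g c‖ ^ 2 = ‖(2 * Real.pi * I : ℂ) • F c‖ := hnorm.symm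
    _ = ‖∮ z in C(c, r), (z - c)⁻¹ • F z‖ := by
        rw [hcau]
    _ ≤ _ := hle

lemma circleMap_eq_polar (c : ℂ) (p : ℝ × ℝ) :
    c + Complex.polarCoord.symm p = circleMap c p.1 p.2 := by
  rw [Complex.polarCoord_symm_apply, circleMap, Complex.exp_mul_I]
  push_cast
  ring

lemma disc_submean {g : ℂ → ℂ} {V : Set ℂ} (hV : IsOpen V) {c : ℂ} {R : ℝ} (hR : 0 < R)
    (hsub : closedBall c R ⊆ V) (hg : DifferentiableOn ℂ g V) :
    Real.pi * R ^ 2 * ‖g c‖ ^ 2 ≤ ∫ z in closedBall c R, ‖g z‖ ^ 2 := by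
  have hgc : ContinuousOn g V := hg.continuousOn
  -- the integrand in polar coordinates
  set F : ℝ × ℝ → ℝ := fun p => p.1 * ‖g (circleMap c p.1 p.2)‖ ^ 2 with hFdef
  set s : Set (ℝ × ℝ) := Ioc 0 R ×ˢ Ioo (-Real.pi) Real.pi with hsdef
  -- continuity of F on a compact neighborhood
  have hmapK : ∀ p ∈ Icc (0:ℝ) R ×ˢ Icc (-Real.pi) Real.pi, circleMap c p.1 p.2 ∈ V := by
    rintro ⟨a, b⟩ ⟨ha, _⟩
    refine hsub ?_
    simp only [mem_closedBall, dist_eq, circleMap]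
    rw [add_sub_cancel_left]
    rw [norm_mul, Complex.norm_exp_ofReal_mul_I, mul_one, Complex.norm_real,
      Real.norm_of_nonneg ha.1]
    exact ha.2
  have hcm : Continuous fun p : ℝ × ℝ => circleMap c p.1 p.2 := by
    simp only [circleMap]
    fun_prop
  have hFc : ContinuousOn F (Icc (0:ℝ) R ×ˢ Icc (-Real.pi) Real.pi) := by
    apply ContinuousOn.mul (continuous_fst.continuousOn)
    exact ((hgc.comp hcm.continuousOn hmapK).norm.pow 2)
  have hKcomp : IsCompact (Icc (0:ℝ) R ×ˢ Icc (-Real.pi) Real.pi) :=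
    isCompact_Icc.prod isCompact_Icc
  have hssub : s ⊆ Icc (0:ℝ) R ×ˢ Icc (-Real.pi) Real.pi :=
    prod_mono Ioc_subset_Icc_self Ioo_subset_Icc_self
  have hFint : IntegrableOn F s := (hFc.integrableOn_compact hKcomp).mono_set hssub
  -- step 1: the disc integral equals the polar-coordinates integral
  set G : ℂ → ℝ := (closedBall (0:ℂ) R).indicator fun w => ‖g (c + w)‖ ^ 2 with hGdef
  have e1 : ∫ z in closedBall c R, ‖g z‖ ^ 2 = ∫ w, G w := by
    rw [← MeasureTheory.integral_indicator (measurableSet_closedBall)]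
    rw [← MeasureTheory.integral_add_left_eq_self
      ((closedBall c R).indicator fun z => ‖g z‖ ^ 2) c]
    congr 1
    ext w
    rw [hGdef]
    by_cases hw : w ∈ closedBall (0:ℂ) R
    · rw [indicator_of_mem hw, indicator_of_mem]
      simpa [dist_eq] using hw
    · rw [indicator_of_notMem hw, indicator_of_notMem]
      intro hcw
      exact hw (by simpa [dist_eq] using hcw)
  have e2 : (∫ p in polarCoord.target, p.1 • G (Complex.polarCoord.symm p)) = ∫ w, G w :=
    Complex.integral_comp_polarCoord_symm G
  have htgt : polarCoord.target = Ioi (0:ℝ) ×ˢ Ioo (-Real.pi) Real.pi := rfl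
  have hssub' : s ⊆ polarCoord.target := by
    rw [htgt, hsdef]
    exact prod_mono Ioc_subset_Ioi_self subset_rfl
  have e3 : ∫ p in polarCoord.target, p.1 • G (Complex.polarCoord.symm p)
      = ∫ p in s, F p := by
    have h1 : ∫ p in polarCoord.target, p.1 • G (Complex.polarCoord.symm p)
        = ∫ p in polarCoord.target, s.indicator F p := by
      refine setIntegral_congr_fun polarCoord.open_target.measurableSet ?_
      rintro ⟨a, b⟩ hp
      rw [htgt] at hp
      have ha : (0:ℝ) < a := hp.1
      have hb : b ∈ Ioo (-Real.pi) Real.pi := hp.2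
      have habs : ‖Complex.polarCoord.symm (a, b)‖ = a := by
        rw [Complex.norm_polarCoord_symm]; exact _root_.abs_of_pos ha
      by_cases haR : a ≤ R
      · have hmem : Complex.polarCoord.symm (a, b) ∈ closedBall (0:ℂ) R := by
          rw [mem_closedBall_zero_iff, habs]; exact haR
        have hmem2 : (a, b) ∈ s := ⟨⟨ha, haR⟩, hb⟩
        rw [indicator_of_mem hmem2]
        simp only [hGdef, indicator_of_mem hmem, smul_eq_mul, hFdef]
        rw [circleMap_eq_polar]
      · have hmem : Complex.polarCoord.symm (a, b) ∉ closedBall (0:ℂ) R := by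
          rw [mem_closedBall_zero_iff, habs]; exact haR
        have hmem2 : (a, b) ∉ s := fun h => haR h.1.2
        rw [indicator_of_notMem hmem2]
        simp only [hGdef]
        rw [indicator_of_notMem hmem, smul_zero]
    rw [h1, MeasureTheory.setIntegral_indicator (measurableSet_Ioc.prod measurableSet_Ioo),
      inter_eq_self_of_subset_right hssub']
  -- step 2: Fubini
  have e4 : ∫ p in s, F p
      = ∫ a in Ioc (0:ℝ) R, ∫ b in Ioo (-Real.pi) Real.pi, F (a, b) := by
    rw [hsdef, MeasureTheory.Measure.volume_eq_prod] at hFint ⊢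
    exact MeasureTheory.setIntegral_prod F hFint
  -- integrability of the inner integral
  have hFint' : Integrable F (((volume : Measure ℝ).restrict (Ioc 0 R)).prod
      ((volume : Measure ℝ).restrict (Ioo (-Real.pi) Real.pi))) := by
    rwa [MeasureTheory.Measure.prod_restrict, ← MeasureTheory.Measure.volume_eq_prod, ← hsdef]
  have hinner_int : IntegrableOn
      (fun a => ∫ b in Ioo (-Real.pi) Real.pi, F (a, b)) (Ioc (0:ℝ) R) :=
    hFint'.integral_prod_left
  -- step 3: pointwise lower bound on the inner integral
  have key : ∀ a ∈ Ioc (0:ℝ) R,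
      2 * Real.pi * ‖g c‖ ^ 2 * a ≤ ∫ b in Ioo (-Real.pi) Real.pi, F (a, b) := by
    intro a ha
    have ha0 : 0 < a := ha.1
    have hsub' : closedBall c a ⊆ V := (closedBall_subset_closedBall ha.2).trans hsub
    have hcirc := circle_submean ha0 (hg.mono hsub')
    have hper : Function.Periodic (fun θ => ‖g (circleMap c a θ)‖ ^ 2) (2 * Real.pi) := by
      intro θ
      simp [periodic_circleMap c a θ]
    have e5 : ∫ b in Ioo (-Real.pi) Real.pi, F (a, b)
        = a * ∫ b in Ioo (-Real.pi) Real.pi, ‖g (circleMap c a b)‖ ^ 2 := by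
      simp only [hFdef]
      exact MeasureTheory.integral_const_mul a _
    have e6 : ∫ b in Ioo (-Real.pi) Real.pi, ‖g (circleMap c a b)‖ ^ 2
        = ∫ θ in (0:ℝ)..(2*Real.pi), ‖g (circleMap c a θ)‖ ^ 2 := by
      rw [← MeasureTheory.integral_Ioc_eq_integral_Ioo,
        ← intervalIntegral.integral_of_le (by linarith [Real.pi_pos] : -Real.pi ≤ Real.pi)]
      have := hper.intervalIntegral_add_eq (-Real.pi) 0
      rw [zero_add] at this
      rw [← this]
      norm_num
      ring_nf
    rw [e5, e6]
    calc 2 * Real.pi * ‖g c‖ ^ 2 * a = a * (2 * Real.pi * ‖g c‖ ^ 2) := by ring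
      _ ≤ a * ∫ θ in (0:ℝ)..(2*Real.pi), ‖g (circleMap c a θ)‖ ^ 2 :=
        mul_le_mul_of_nonneg_left hcirc ha0.le
  -- step 4: integrate the lower bound
  have e7 : ∫ a in Ioc (0:ℝ) R, 2 * Real.pi * ‖g c‖ ^ 2 * a
      = Real.pi * R ^ 2 * ‖g c‖ ^ 2 := by
    rw [MeasureTheory.integral_const_mul, ← intervalIntegral.integral_of_le hR.le,
      integral_id]
    ring
  have mono := MeasureTheory.setIntegral_mono_on
    (f := fun a => 2 * Real.pi * ‖g c‖ ^ 2 * a)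
    (g := fun a => ∫ b in Ioo (-Real.pi) Real.pi, F (a, b))
    ((continuous_const.mul continuous_id).integrableOn_Ioc) hinner_int
    measurableSet_Ioc key
  rw [e1, ← e2, e3, e4]
  calc Real.pi * R ^ 2 * ‖g c‖ ^ 2 = ∫ a in Ioc (0:ℝ) R, 2 * Real.pi * ‖g c‖ ^ 2 * a := e7.symm
    _ ≤ _ := mono

set_option maxHeartbeats 1000000 in
lemma polydisc_submean {f : ℂ × ℂ → ℂ} {U : Set (ℂ × ℂ)} (hU : IsOpen U)
    (hf : DifferentiableOn ℂ f U) {a b : ℂ} {r₁ r₂ : ℝ} (h1 : 0 < r₁) (h2 : 0 < r₂)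
    (hsub : closedBall a r₁ ×ˢ closedBall b r₂ ⊆ U) :
    Real.pi * r₁ ^ 2 * (Real.pi * r₂ ^ 2) * ‖f (a, b)‖ ^ 2
      ≤ ∫ p in closedBall a r₁ ×ˢ closedBall b r₂, ‖f p‖ ^ 2 := by
  have hfc : ContinuousOn f U := hf.continuousOn
  -- integrability of ‖f‖² on the closed polydisc
  have hPcomp : IsCompact (closedBall a r₁ ×ˢ closedBall b r₂) :=
    (isCompact_closedBall a r₁).prod (isCompact_closedBall b r₂)
  have hInt : IntegrableOn (fun p => ‖f p‖ ^ 2) (closedBall a r₁ ×ˢ closedBall b r₂) :=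
    (((hfc.mono hsub).norm.pow 2)).integrableOn_compact hPcomp
  -- slices
  have hslice2 : ∀ z ∈ closedBall a r₁,
      Real.pi * r₂ ^ 2 * ‖f (z, b)‖ ^ 2 ≤ ∫ w in closedBall b r₂, ‖f (z, w)‖ ^ 2 := by
    intro z hz
    have hopen : IsOpen {w : ℂ | (z, w) ∈ U} := hU.preimage (Continuous.prodMk_right z)
    have hsub2 : closedBall b r₂ ⊆ {w : ℂ | (z, w) ∈ U} := fun w hw => hsub ⟨hz, hw⟩
    have hd : DifferentiableOn ℂ (fun w => f (z, w)) {w : ℂ | (z, w) ∈ U} := by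
      intro w hw
      have h0 : DifferentiableAt ℂ f (z, w) :=
        (hf (z, w) hw).differentiableAt (hU.mem_nhds hw)
      have h1 : DifferentiableAt ℂ (fun w : ℂ => ((z, w) : ℂ × ℂ)) w :=
        (differentiableAt_const z).prodMk differentiableAt_id
      exact (h0.comp w h1).differentiableWithinAt
    exact disc_submean (g := fun w => f (z, w)) (c := b) hopen h2 hsub2 hd
  have hslice1 :
      Real.pi * r₁ ^ 2 * ‖f (a, b)‖ ^ 2 ≤ ∫ z in closedBall a r₁, ‖f (z, b)‖ ^ 2 := by
    have hopen : IsOpen {z : ℂ | (z, b) ∈ U} := hU.preimage (continuous_id.prodMk continuous_const)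
    have hsub1 : closedBall a r₁ ⊆ {z : ℂ | (z, b) ∈ U} :=
      fun z hz => hsub ⟨hz, mem_closedBall_self h2.le⟩
    have hd : DifferentiableOn ℂ (fun z => f (z, b)) {z : ℂ | (z, b) ∈ U} := by
      intro z hz
      have h0 : DifferentiableAt ℂ f (z, b) :=
        (hf (z, b) hz).differentiableAt (hU.mem_nhds hz)
      have h1 : DifferentiableAt ℂ (fun z : ℂ => ((z, b) : ℂ × ℂ)) z :=
        differentiableAt_id.prodMk (differentiableAt_const b)
      exact (h0.comp z h1).differentiableWithinAt
    exact disc_submean (g := fun z => f (z, b)) (c := a) hopen h1 hsub1 hd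
  -- Fubini
  have hInt' : Integrable (fun p : ℂ × ℂ => ‖f p‖ ^ 2)
      (((volume : Measure ℂ).restrict (closedBall a r₁)).prod
        ((volume : Measure ℂ).restrict (closedBall b r₂))) := by
    rwa [MeasureTheory.Measure.prod_restrict, ← MeasureTheory.Measure.volume_eq_prod]
  have hfub : ∫ p in closedBall a r₁ ×ˢ closedBall b r₂, ‖f p‖ ^ 2
      = ∫ z in closedBall a r₁, ∫ w in closedBall b r₂, ‖f (z, w)‖ ^ 2 := by
    rw [MeasureTheory.Measure.volume_eq_prod] at hInt ⊢
    exact MeasureTheory.setIntegral_prod _ hInt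
  have hinner_int : IntegrableOn
      (fun z => ∫ w in closedBall b r₂, ‖f (z, w)‖ ^ 2) (closedBall a r₁) :=
    hInt'.integral_prod_left
  -- the middle function is integrable (continuous on a compact set)
  have hmid_int : IntegrableOn
      (fun z => Real.pi * r₂ ^ 2 * ‖f (z, b)‖ ^ 2) (closedBall a r₁) := by
    have hcont : ContinuousOn (fun z => f (z, b)) (closedBall a r₁) := by
      refine (hfc.mono hsub).comp
        (continuous_id.prodMk continuous_const).continuousOn ?_
      exact fun z hz => ⟨hz, mem_closedBall_self h2.le⟩
    exact (continuousOn_const.mul ((hcont.norm.pow 2))).integrableOn_compact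
      (isCompact_closedBall a r₁)
  have step : ∫ z in closedBall a r₁, Real.pi * r₂ ^ 2 * ‖f (z, b)‖ ^ 2
      ≤ ∫ z in closedBall a r₁, ∫ w in closedBall b r₂, ‖f (z, w)‖ ^ 2 :=
    MeasureTheory.setIntegral_mono_on hmid_int hinner_int measurableSet_closedBall
      (fun z hz => hslice2 z hz)
  calc Real.pi * r₁ ^ 2 * (Real.pi * r₂ ^ 2) * ‖f (a, b)‖ ^ 2
      = Real.pi * r₂ ^ 2 * (Real.pi * r₁ ^ 2 * ‖f (a, b)‖ ^ 2) := by ring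
    _ ≤ Real.pi * r₂ ^ 2 * ∫ z in closedBall a r₁, ‖f (z, b)‖ ^ 2 :=
        mul_le_mul_of_nonneg_left hslice1 (by positivity)
    _ = ∫ z in closedBall a r₁, Real.pi * r₂ ^ 2 * ‖f (z, b)‖ ^ 2 :=
        (MeasureTheory.integral_const_mul _ _).symm
    _ ≤ ∫ z in closedBall a r₁, ∫ w in closedBall b r₂, ‖f (z, w)‖ ^ 2 := step
    _ = _ := hfub.symm

/-- upper bound for the Bergman kernel of the model domain on the
diagonal, in variational form: there are δ₀, M > 0 such that every f ∈ A(Ω_{τ,C} ∩ W)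
of L²-norm at most 1 satisfies |f(0,δ)|² ≤ M δ^{-2-2/τ} for 0 < δ < δ₀. -/
theorem statement_8 (τ C : ℝ) (hτ : 0 < τ) (hC : 0 < C)
    (W : Set (ℂ × ℂ)) (hW : W ∈ 𝓝 (0 : ℂ × ℂ)) :
    ∃ δ₀ > 0, ∃ M > 0, ∀ δ : ℝ, 0 < δ → δ < δ₀ →
      ∀ f : ℂ × ℂ → ℂ, DifferentiableOn ℂ f (modelDomain τ C ∩ W) →
        MeasureTheory.IntegrableOn (fun p => ‖f p‖ ^ 2) (modelDomain τ C ∩ W) →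
        (∫ p in modelDomain τ C ∩ W, ‖f p‖ ^ 2) ≤ 1 →
        ‖f ((0 : ℂ), ((δ : ℝ) : ℂ))‖ ^ 2 ≤ M * δ ^ (-2 - 2 / τ) := by
  obtain ⟨ε, hε, hball⟩ := Metric.mem_nhds_iff.mp hW
  refine ⟨min (ε/2) (4*C*ε^τ), by positivity, 16*(C+1)^2 * (4*C)^(2/τ) / Real.pi^2,
    by positivity, ?_⟩
  intro δ hδ hδ₀ f hdf hint hle1
  set M : ℝ := 16*(C+1)^2 * (4*C)^(2/τ) / Real.pi^2 with hM
  set r₁ : ℝ := (δ/(4*C)) ^ (1/τ) with hr1def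
  set r₂ : ℝ := δ/(4*(C+1)) with hr2def
  have hd4C : (0:ℝ) < δ/(4*C) := by positivity
  have hr1 : 0 < r₁ := Real.rpow_pos_of_pos hd4C _
  have hr2 : 0 < r₂ := by positivity
  have hδε : δ < ε/2 := lt_of_lt_of_le hδ₀ (min_le_left _ _)
  have hδε2 : δ < 4*C*ε^τ := lt_of_lt_of_le hδ₀ (min_le_right _ _)
  -- r₁ ^ τ = δ / (4C)
  have hr1τ : r₁ ^ τ = δ/(4*C) := by
    rw [hr1def, ← Real.rpow_mul hd4C.le, one_div_mul_cancel hτ.ne', Real.rpow_one]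
  -- r₁ < ε
  have hr1ε : r₁ < ε := by
    have h1 : δ/(4*C) < ε^τ := by
      rw [div_lt_iff₀ (by positivity)]
      linarith [hδε2]
    have h2 : r₁ < (ε^τ)^(1/τ) := Real.rpow_lt_rpow hd4C.le h1 (by positivity)
    rwa [← Real.rpow_mul hε.le, mul_one_div_cancel hτ.ne', Real.rpow_one] at h2
  -- C * r₂ ≤ δ/4 and r₂ ≤ δ/4
  have hr2a : C * r₂ ≤ δ/4 := by
    rw [hr2def, ← mul_div_assoc, div_le_div_iff₀ (by positivity) (by norm_num)]
    nlinarith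
  have hr2b : r₂ ≤ δ/4 := by
    rw [hr2def, div_le_div_iff₀ (by positivity) (by norm_num)]
    nlinarith
  -- the polydisc is inside the domain
  set P : Set (ℂ × ℂ) := closedBall (0:ℂ) r₁ ×ˢ closedBall ((δ:ℂ)) r₂ with hPdef
  have hPsub : P ⊆ modelDomain τ C ∩ ball (0 : ℂ × ℂ) ε := by
    rintro ⟨z₁, z₂⟩ ⟨hz₁, hz₂⟩
    have hz₁' : ‖z₁‖ ≤ r₁ := mem_closedBall_zero_iff.mp hz₁
    have hz₂' : ‖z₂ - (δ:ℂ)‖ ≤ r₂ := mem_closedBall_iff_norm.mp hz₂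
    have him : |z₂.im| ≤ r₂ := by
      have h := Complex.abs_im_le_norm (z₂ - (δ:ℂ))
      rw [Complex.sub_im, Complex.ofReal_im, sub_zero] at h
      exact h.trans hz₂'
    have hre : δ - r₂ ≤ z₂.re := by
      have h := Complex.abs_re_le_norm (z₂ - (δ:ℂ))
      rw [Complex.sub_re, Complex.ofReal_re] at h
      have := abs_le.mp (h.trans hz₂')
      linarith [this.1]
    constructor
    · show C * ‖z₁‖ ^ τ + C * |z₂.im| < z₂.re
      have h1 : ‖z₁‖ ^ τ ≤ r₁ ^ τ := Real.rpow_le_rpow (norm_nonneg _) hz₁' hτ.le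
      have h2 : C * ‖z₁‖ ^ τ ≤ δ/4 := by
        rw [hr1τ] at h1
        calc C * ‖z₁‖ ^ τ ≤ C * (δ/(4*C)) := by nlinarith
          _ = δ/4 := by field_simp
      have h3 : C * |z₂.im| ≤ δ/4 := le_trans (by nlinarith [abs_nonneg z₂.im]) hr2a
      linarith
    · rw [mem_ball_zero_iff, Prod.norm_def]
      apply max_lt (lt_of_le_of_lt hz₁' hr1ε)
      have hnδ : ‖(δ:ℂ)‖ = δ := by
        rw [Complex.norm_real, Real.norm_of_nonneg hδ.le]
      calc ‖z₂‖ = ‖z₂ - (δ:ℂ) + (δ:ℂ)‖ := by rw [sub_add_cancel]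
        _ ≤ ‖z₂ - (δ:ℂ)‖ + ‖(δ:ℂ)‖ := norm_add_le _ _
        _ ≤ r₂ + δ := by rw [hnδ]; linarith
        _ < ε := by linarith
  -- the model domain intersected with the ball is open
  have hopen : IsOpen (modelDomain τ C ∩ ball (0 : ℂ × ℂ) ε) := by
    refine IsOpen.inter ?_ isOpen_ball
    have hc1 : Continuous fun x : ℝ => x ^ τ :=
      continuous_iff_continuousAt.mpr fun x => Real.continuousAt_rpow_const x τ (Or.inr hτ.le)
    have hcl : Continuous fun p : ℂ × ℂ => C * ‖p.1‖ ^ τ + C * |p.2.im| := by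
      apply Continuous.add
      · exact continuous_const.mul (hc1.comp continuous_fst.norm)
      · exact continuous_const.mul (continuous_abs.comp (Complex.continuous_im.comp
          continuous_snd))
    exact isOpen_lt hcl (Complex.continuous_re.comp continuous_snd)
  have hUsub : modelDomain τ C ∩ ball (0 : ℂ × ℂ) ε ⊆ modelDomain τ C ∩ W :=
    inter_subset_inter_right _ hball
  -- apply the polydisc sub-mean value inequality
  have hkey := polydisc_submean hopen (hdf.mono hUsub) hr1 hr2 hPsub
  -- the polydisc integral is at most 1
  have hPle : (∫ p in P, ‖f p‖ ^ 2) ≤ ∫ p in modelDomain τ C ∩ W, ‖f p‖ ^ 2 := by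
    apply MeasureTheory.setIntegral_mono_set hint
    · exact ae_of_all _ fun p => by positivity
    · exact HasSubset.Subset.eventuallyLE (hPsub.trans hUsub)
  have hmain : Real.pi * r₁ ^ 2 * (Real.pi * r₂ ^ 2) * ‖f ((0:ℂ), (δ:ℂ))‖ ^ 2 ≤ 1 :=
    le_trans hkey (le_trans hPle hle1)
  -- conclude
  have hpos : (0:ℝ) < Real.pi * r₁ ^ 2 * (Real.pi * r₂ ^ 2) := by positivity
  have hstep : ‖f ((0:ℂ), (δ:ℂ))‖ ^ 2 ≤ 1 / (Real.pi * r₁ ^ 2 * (Real.pi * r₂ ^ 2)) := by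
    rw [le_div_iff₀ hpos]
    linarith [hmain]
  refine le_trans hstep (le_of_eq ?_)
  -- compute the constant
  have hr1sq : r₁ ^ 2 = δ^(2/τ) / (4*C)^(2/τ) := by
    have hexp : (1/τ) * ((2:ℕ):ℝ) = 2/τ := by push_cast; ring
    rw [hr1def, ← Real.rpow_natCast _ 2, ← Real.rpow_mul hd4C.le, hexp,
      Real.div_rpow hδ.le (by positivity)]
  have hr2sq : r₂ ^ 2 = δ^2 / (16*(C+1)^2) := by
    rw [hr2def, div_pow]
    congr 1
    ring
  have hrpow2 : δ ^ ((2:ℕ):ℝ) = δ ^ (2:ℕ) := Real.rpow_natCast δ 2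
  have hδexp : δ ^ (-2 - 2/τ) = (δ ^ (2/τ) * δ ^ (2:ℕ))⁻¹ := by
    rw [← hrpow2, ← Real.rpow_add hδ, ← Real.rpow_neg hδ.le]
    congr 1
    push_cast
    ring
  have hne1 : δ ^ (2/τ) ≠ 0 := (Real.rpow_pos_of_pos hδ _).ne'
  have hne2 : (4*C)^(2/τ) ≠ 0 := (Real.rpow_pos_of_pos (by positivity) _).ne'
  rw [hδexp, hr1sq, hr2sq, hM]
  have hπ : Real.pi ≠ 0 := Real.pi_ne_zero
  have hC1 : (C+1) ≠ 0 := by positivity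
  have hδne : δ ≠ 0 := hδ.ne'
  field_simp

end
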